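/- Let k be a commutative ring and A a commutative k-algebra, Ω_{A/k} the module of Kähler differentials with universal derivation d : A → Ω_{A/k}, and for each p, Δ let d̄ : A[[s]]_Δ → Ω_{A/k}[[s]]_Δ be the coefficientwise application of d. Then the A-module Ω_{A/k} carries a unique left pre-HS-module structure {fLie^p_Δ} over A/k such that d is a HS-map, i.e. such that fLie^p_Δ(D) ∘ d̄ = d̄ ∘ D̃ for every p ∈ ℕ, every nonempty co-ideal Δ ⊆ ℕ^p, and every D ∈ HS^p_k(A;Δ). In particular, writing fLie^p_Δ(D) = Σ_α fLie^p_Δ(D)_α s^α, one has fLie^p_Δ(D)_α ∘ d = d ∘ D_α for all α ∈ Δ. -/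

import Mathlib

open scoped Classical

namespace HS

/-- multi-indices in `ℕ^p` -/
abbrev MIdx (p : ℕ) := Fin p → ℕ

/-- the total weight `|α|` of a multi-index -/
def wt {p : ℕ} (α : MIdx p) : ℕ := ∑ i, α i

/-- a non-empty co-ideal of `ℕ^p` -/
def IsCoideal {p : ℕ} (Δ : Set (MIdx p)) : Prop :=
  Δ.Nonempty ∧ ∀ ⦃α : MIdx p⦄, α ∈ Δ → ∀ ⦃β : MIdx p⦄, β ≤ α → β ∈ Δ

/-- Convolution product of two power series, given by their coefficient families:
this is the multiplication of `R[[s]]_Δ` (in terms of representatives). -/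
def sconv {p : ℕ} {R : Type*} [NonUnitalNonAssocSemiring R] (f g : MIdx p → R) : MIdx p → R :=
  fun α => ∑ β ∈ Finset.Iic α, f β * g (α - β)

/-- Applying a series of linear operators to a series of module elements; for an
operator family `f`, `fapply f` is the induced `k[[s]]_Δ`-linear map `f̃ = ∑ f_β s^β`. -/
def fapply {p : ℕ} {k M N : Type*} [Semiring k] [AddCommMonoid M] [AddCommMonoid N]
    [Module k M] [Module k N] (f : MIdx p → (M →ₗ[k] N)) (m : MIdx p → M) : MIdx p → N :=
  fun α => ∑ β ∈ Finset.Iic α, f β (m (α - β))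

/-- a series of scalars acting on a series of module elements:
the module structure of `M[[s]]_Δ` over `A[[s]]_Δ` (in terms of representatives). -/
def smul' {p : ℕ} {A M : Type*} [Semiring A] [AddCommMonoid M] [Module A M]
    (a : MIdx p → A) (m : MIdx p → M) : MIdx p → M :=
  fun α => ∑ β ∈ Finset.Iic α, a β • m (α - β)

/-- the unit (delta) series `1` -/
def one' {p : ℕ} {R : Type*} [Zero R] [One R] : MIdx p → R :=
  fun α => if α = 0 then 1 else 0

/-- `D` is a `(p,Δ)`-variate Hasse–Schmidt derivation of `A` over `k`:
`D_0 = id` and the Leibniz rule `D_α(xy) = ∑_{β+γ=α} D_β(x) D_γ(y)` for `α ∈ Δ`. -/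
def IsHS (k A : Type*) [CommRing k] [CommRing A] [Algebra k A] {p : ℕ}
    (Δ : Set (MIdx p)) (D : MIdx p → Module.End k A) : Prop :=
  D 0 = 1 ∧ ∀ α ∈ Δ, ∀ x y : A,
    D α (x * y) = ∑ β ∈ Finset.Iic α, D β x * D (α - β) y

/-- A substitution map `φ : A[[s]]_Δ → A[[t]]_∇`, modelled by the family of its
coefficients `C α e = C_e(φ,α)` (the coefficient of `t^e` in `φ(s^α)`):
it is multiplicative on monomials, unital, of order `≥ 1` (so `C α e = 0` for
`|e| < |α|`), kills the classes of monomials `s^α` with `α ∉ Δ`, and is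
normalized to vanish outside `∇`. -/
structure SubstMap (A : Type*) [CommRing A] (p q : ℕ)
    (Δ : Set (MIdx p)) (nab : Set (MIdx q)) where
  C : MIdx p → MIdx q → A
  c_zero : ∀ e ∈ nab, C 0 e = if e = 0 then 1 else 0
  c_mul : ∀ α ∈ Δ, ∀ β ∈ Δ, ∀ e ∈ nab,
    C (α + β) e = ∑ u ∈ Finset.Iic e, C α u * C β (e - u)
  c_ord : ∀ α ∈ Δ, ∀ e ∈ nab, wt e < wt α → C α e = 0
  c_suppL : ∀ α : MIdx p, α ∉ Δ → ∀ e : MIdx q, C α e = 0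
  c_suppR : ∀ (α : MIdx p) (e : MIdx q), e ∉ nab → C α e = 0

variable {A' : Type*} [CommRing A'] {p' q' : ℕ} {Δ' : Set (MIdx p')} {nab' : Set (MIdx q')}

/-- the map `A[[s]]_Δ → A[[t]]_∇` induced by a substitution map -/
def SubstMap.app (φ : SubstMap A' p' q' Δ' nab') (f : MIdx p' → A') : MIdx q' → A' :=
  fun e => ∑ α ∈ Finset.Iic (fun _ => wt e : MIdx p'), φ.C α e * f α

/-- `φ • D` for a series of `k`-linear endomorphisms of `A` -/
def SubstMap.bulletEnd {k : Type*} [CommRing k] [Algebra k A']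
    (φ : SubstMap A' p' q' Δ' nab') (D : MIdx p' → Module.End k A') :
    MIdx q' → Module.End k A' :=
  fun e => ∑ α ∈ Finset.Iic (fun _ => wt e : MIdx p'), φ.C α e • D α

/-- `φ • r` for a series with coefficients in a `k`-algebra `S` over `A`
(with structural map `ι : A → S`) -/
def SubstMap.bulletS {S : Type*} [Ring S] (ι : A' → S)
    (φ : SubstMap A' p' q' Δ' nab') (r : MIdx p' → S) : MIdx q' → S :=
  fun e => ∑ α ∈ Finset.Iic (fun _ => wt e : MIdx p'), ι (φ.C α e) * r α

/-- `r • φ` for a series with coefficients in a `k`-algebra `S` over `A` -/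
def SubstMap.bulletSR {S : Type*} [Ring S] (ι : A' → S)
    (φ : SubstMap A' p' q' Δ' nab') (r : MIdx p' → S) : MIdx q' → S :=
  fun e => ∑ α ∈ Finset.Iic (fun _ => wt e : MIdx p'), r α * ι (φ.C α e)

/-- `φ • m` for a series with coefficients in an `A`-module `M` -/
def SubstMap.bulletM {M : Type*} [AddCommMonoid M] [Module A' M]
    (φ : SubstMap A' p' q' Δ' nab') (m : MIdx p' → M) : MIdx q' → M :=
  fun e => ∑ α ∈ Finset.Iic (fun _ => wt e : MIdx p'), φ.C α e • m α

/-- `φ` has constant coefficients, i.e. all the `C_e(φ,α)` come from `k` -/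
def SubstMap.HasConstCoeffs (k : Type*) [CommRing k] [Algebra k A']
    (φ : SubstMap A' p' q' Δ' nab') : Prop :=
  ∀ (α : MIdx p') (e : MIdx q'), φ.C α e ∈ Set.range (algebraMap k A')

/-- a system of maps `Ψ^p_Δ : HS^p_k(A;Δ) → U^p(End_k(M);Δ)` as in a
(pre-)HS-module structure on `M` over `A/k` -/
abbrev HSSystem (k A M : Type*) [CommRing k] [CommRing A] [Algebra k A]
    [AddCommMonoid M] [Module k M] : Type _ :=
  ∀ (p : ℕ) (Δ : Set (MIdx p)), (MIdx p → Module.End k A) → (MIdx p → Module.End k M)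

/-- `Ψ` is a left pre-HS-module structure on `M` over `A/k`:  for each `p`, each
non-empty co-ideal `Δ ⊆ ℕ^p` and each `D ∈ HS^p_k(A;Δ)`, the automorphism
`Ψ^p_Δ(D)` of `M[[s]]_Δ` (given by its family of coefficients in `End_k(M)`) has
constant coefficient the identity, depends only on the class of `D`, is
multiplicative in `D`, is invertible, satisfies the Leibniz rule
`Ψ^p_Δ(D)·a = D̃(a)·Ψ^p_Δ(D)`, and is compatible with the action of substitution
maps with constant coefficients:  `Ψ^q_∇(φ•D) = φ•Ψ^p_Δ(D)`. -/
def IsPreHSMod (k A M : Type*) [CommRing k] [CommRing A] [Algebra k A]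
    [AddCommGroup M] [Module k M] [Module A M] [IsScalarTower k A M]
    (Ψ : HSSystem k A M) : Prop :=
  ∀ (p : ℕ) (Δ : Set (MIdx p)), IsCoideal Δ →
    ∀ D : MIdx p → Module.End k A, IsHS k A Δ D →
      (Ψ p Δ D 0 = 1)
      ∧ (∀ D' : MIdx p → Module.End k A, IsHS k A Δ D' → (∀ α ∈ Δ, D α = D' α) →
          ∀ α ∈ Δ, Ψ p Δ D α = Ψ p Δ D' α)
      ∧ (∀ E : MIdx p → Module.End k A, IsHS k A Δ E →
          ∀ α ∈ Δ, Ψ p Δ (sconv D E) α = sconv (Ψ p Δ D) (Ψ p Δ E) α)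
      ∧ (∃ Θ : MIdx p → Module.End k M,
          (∀ α ∈ Δ, sconv (Ψ p Δ D) Θ α = (one' : MIdx p → Module.End k M) α)
          ∧ (∀ α ∈ Δ, sconv Θ (Ψ p Δ D) α = (one' : MIdx p → Module.End k M) α))
      ∧ (∀ (a : MIdx p → A) (m : MIdx p → M), ∀ α ∈ Δ,
          fapply (Ψ p Δ D) (smul' a m) α = smul' (fapply D a) (fapply (Ψ p Δ D) m) α)
      ∧ (∀ (q : ℕ) (nab : Set (MIdx q)), IsCoideal nab →
          ∀ φ : SubstMap A p q Δ nab, φ.HasConstCoeffs k →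
          ∀ e ∈ nab, ∀ x : M,
            Ψ q nab (φ.bulletEnd D) e x
              = ∑ α ∈ Finset.Iic (fun _ => wt e : MIdx p), φ.C α e • Ψ p Δ D α x)

/-- `Ψ` is a left HS-module structure on `M` over `A/k`: as `IsPreHSMod`, but with
compatibility with the action of arbitrary substitution maps. -/
def IsHSMod (k A M : Type*) [CommRing k] [CommRing A] [Algebra k A]
    [AddCommGroup M] [Module k M] [Module A M] [IsScalarTower k A M]
    (Ψ : HSSystem k A M) : Prop :=
  ∀ (p : ℕ) (Δ : Set (MIdx p)), IsCoideal Δ →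
    ∀ D : MIdx p → Module.End k A, IsHS k A Δ D →
      (Ψ p Δ D 0 = 1)
      ∧ (∀ D' : MIdx p → Module.End k A, IsHS k A Δ D' → (∀ α ∈ Δ, D α = D' α) →
          ∀ α ∈ Δ, Ψ p Δ D α = Ψ p Δ D' α)
      ∧ (∀ E : MIdx p → Module.End k A, IsHS k A Δ E →
          ∀ α ∈ Δ, Ψ p Δ (sconv D E) α = sconv (Ψ p Δ D) (Ψ p Δ E) α)
      ∧ (∃ Θ : MIdx p → Module.End k M,
          (∀ α ∈ Δ, sconv (Ψ p Δ D) Θ α = (one' : MIdx p → Module.End k M) α)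
          ∧ (∀ α ∈ Δ, sconv Θ (Ψ p Δ D) α = (one' : MIdx p → Module.End k M) α))
      ∧ (∀ (a : MIdx p → A) (m : MIdx p → M), ∀ α ∈ Δ,
          fapply (Ψ p Δ D) (smul' a m) α = smul' (fapply D a) (fapply (Ψ p Δ D) m) α)
      ∧ (∀ (q : ℕ) (nab : Set (MIdx q)), IsCoideal nab →
          ∀ φ : SubstMap A p q Δ nab,
          ∀ e ∈ nab, ∀ x : M,
            Ψ q nab (φ.bulletEnd D) e x
              = ∑ α ∈ Finset.Iic (fun _ => wt e : MIdx p), φ.C α e • Ψ p Δ D α x)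

/-! ### Auxiliary material -/

section Aux

variable {p : ℕ}

lemma wt_add (a b : MIdx p) : wt (a + b) = wt a + wt b := by
  simp [wt, Finset.sum_add_distrib]

@[simp] lemma wt_zero : wt (0 : MIdx p) = 0 := by simp [wt]

lemma wt_eq_zero {a : MIdx p} : wt a = 0 ↔ a = 0 := by
  simp only [wt, Finset.sum_eq_zero_iff, Finset.mem_univ, forall_true_left]
  exact ⟨fun h => funext h, fun h i => congrFun h i⟩

lemma wt_sub_add (a b : MIdx p) (h : b ≤ a) : wt b + wt (a - b) = wt a := by
  rw [← wt_add, add_tsub_cancel_of_le h]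

lemma wt_le_of_le {a b : MIdx p} (h : b ≤ a) : wt b ≤ wt a :=
  Finset.sum_le_sum fun i _ => h i

lemma wt_tsub_lt {a b : MIdx p} (h : b ≤ a) (hb : b ≠ 0) : wt (a - b) < wt a := by
  have := wt_sub_add a b h
  have hb' : 0 < wt b := Nat.pos_of_ne_zero (fun hh => hb (wt_eq_zero.1 hh))
  omega

lemma wt_lt_of_lt {a b : MIdx p} (h : b ≤ a) (hb : b ≠ a) : wt b < wt a := by
  have hab : a - b ≠ 0 := by
    intro hz
    exact hb (le_antisymm h (tsub_eq_zero_iff_le.1 hz))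
  have h1 := wt_sub_add a b h
  have h2 : 0 < wt (a - b) := Nat.pos_of_ne_zero (fun hh => hab (wt_eq_zero.1 hh))
  omega

lemma le_const_of_wt_le {a : MIdx p} {n : ℕ} (h : wt a ≤ n) : a ≤ (fun _ => n : MIdx p) :=
  fun i => le_trans (Finset.single_le_sum (f := a) (fun _ _ => Nat.zero_le _)
    (Finset.mem_univ i)) h

lemma wt_lt_of_not_le_const {a : MIdx p} {n : ℕ} (h : ¬ a ≤ (fun _ => n : MIdx p)) :
    n < wt a := by
  rw [Pi.le_def] at h; push_neg at h
  obtain ⟨i, hi⟩ := h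
  exact lt_of_lt_of_le hi (Finset.single_le_sum (f := a) (fun _ _ => Nat.zero_le _)
      (Finset.mem_univ i))

lemma sum_Iic_zero {M : Type*} [AddCommMonoid M] (f : MIdx p → M) :
    ∑ β ∈ Finset.Iic (0 : MIdx p), f β = f 0 := by
  have : Finset.Iic (0 : MIdx p) = {0} := by
    ext x; simp [Finset.mem_Iic, le_zero_iff]
  rw [this, Finset.sum_singleton]

lemma sum_Iic_swap {M : Type*} [AddCommMonoid M] (α : MIdx p) (f : MIdx p → MIdx p → M) :
    ∑ β ∈ Finset.Iic α, f β (α - β) = ∑ β ∈ Finset.Iic α, f (α - β) β := by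
  refine Finset.sum_nbij' (fun β => α - β) (fun β => α - β) ?_ ?_ ?_ ?_ ?_ <;>
    simp only [Finset.mem_Iic] <;> intro a ha
  · exact tsub_le_self
  · exact tsub_le_self
  · exact tsub_tsub_cancel_of_le ha
  · exact tsub_tsub_cancel_of_le ha
  · rw [tsub_tsub_cancel_of_le ha]

lemma sum_Iic_assoc {M : Type*} [AddCommMonoid M] (α : MIdx p)
    (f : MIdx p → MIdx p → MIdx p → M) :
    ∑ β ∈ Finset.Iic α, ∑ γ ∈ Finset.Iic (α - β), f β γ (α - β - γ)
      = ∑ δ ∈ Finset.Iic α, ∑ β ∈ Finset.Iic δ, f β (δ - β) (α - δ) := by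
  rw [Finset.sum_sigma' (Finset.Iic α) (fun β => Finset.Iic (α - β)),
    Finset.sum_sigma' (Finset.Iic α) (fun δ => Finset.Iic δ)]
  refine Finset.sum_nbij' (fun x => ⟨x.1 + x.2, x.1⟩) (fun y => ⟨y.2, y.1 - y.2⟩) ?_ ?_ ?_ ?_ ?_ <;>
    rintro ⟨u, v⟩ h <;>
    simp only [Finset.mem_sigma, Finset.mem_Iic] at h ⊢
  · exact ⟨(le_tsub_iff_left h.1).1 h.2, le_self_add⟩
  · exact ⟨h.2.trans h.1, tsub_le_tsub_right h.1 v⟩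
  · simp [add_tsub_cancel_left]
  · simp [add_tsub_cancel_of_le h.2]
  · rw [add_tsub_cancel_left, tsub_tsub]

lemma sum_Iic_comm3 {M : Type*} [AddCommMonoid M] (ρ : MIdx p)
    (H : MIdx p → MIdx p → MIdx p → M) :
    ∑ γ ∈ Finset.Iic ρ, ∑ c ∈ Finset.Iic (ρ - γ), H c γ (ρ - γ - c)
      = ∑ c ∈ Finset.Iic ρ, ∑ γ ∈ Finset.Iic (ρ - c), H c γ (ρ - c - γ) := by
  rw [sum_Iic_assoc ρ (fun γ c z => H c γ z)]
  have h : ∀ δ ∈ Finset.Iic ρ, ∑ γ ∈ Finset.Iic δ, H (δ - γ) γ (ρ - δ)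
      = ∑ c ∈ Finset.Iic δ, H c (δ - c) (ρ - δ) := by
    intro δ _
    exact sum_Iic_swap δ (fun x y => H y x (ρ - δ))
  rw [Finset.sum_congr rfl h, ← sum_Iic_assoc ρ (fun c γ z => H c γ z)]

/-- canonical 4-fold decomposition sum -/
def cform {M : Type*} [AddCommMonoid M] (α : MIdx p)
    (F : MIdx p → MIdx p → MIdx p → MIdx p → M) : M :=
  ∑ i ∈ Finset.Iic α, ∑ c ∈ Finset.Iic (α - i), ∑ j ∈ Finset.Iic (α - i - c),
    F i c j (α - i - c - j)

lemma sum_P1 {M : Type*} [AddCommMonoid M] (α : MIdx p)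
    (F : MIdx p → MIdx p → MIdx p → MIdx p → M) :
    ∑ β ∈ Finset.Iic α, ∑ i ∈ Finset.Iic β, ∑ j ∈ Finset.Iic (α - β),
        F i (β - i) j (α - β - j)
      = cform α F := by
  have := (sum_Iic_assoc α (fun i γ ρ => ∑ j ∈ Finset.Iic ρ, F i γ j (ρ - j))).symm
  rw [cform]
  exact this.symm ▸ rfl

lemma sum_P2 {M : Type*} [AddCommMonoid M] (α : MIdx p)
    (F : MIdx p → MIdx p → MIdx p → MIdx p → M) :
    ∑ u ∈ Finset.Iic α, ∑ c ∈ Finset.Iic (α - u), ∑ i ∈ Finset.Iic u,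
        F i c (u - i) (α - u - c)
      = cform α F := by
  have h1 : ∀ u ∈ Finset.Iic α, ∑ c ∈ Finset.Iic (α - u), ∑ i ∈ Finset.Iic u,
        F i c (u - i) (α - u - c)
      = ∑ i ∈ Finset.Iic u, ∑ c ∈ Finset.Iic (α - u), F i c (u - i) (α - u - c) := by
    intro u _; exact Finset.sum_comm
  rw [Finset.sum_congr rfl h1]
  have h2 := sum_Iic_assoc α
    (fun i γ ρ => ∑ c ∈ Finset.Iic ρ, F i c γ (ρ - c))
  rw [← h2, cform]
  exact Finset.sum_congr rfl fun i _ => sum_Iic_comm3 (α - i) (fun c γ z => F i c γ z)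

lemma sum_Iic_pairs {M : Type*} [AddCommMonoid M] (K : MIdx p) (g : MIdx p → MIdx p → M)
    (hvanish : ∀ β γ, ¬ (β + γ ≤ K) → g β γ = 0) :
    ∑ α ∈ Finset.Iic K, ∑ β ∈ Finset.Iic α, g β (α - β)
      = ∑ β ∈ Finset.Iic K, ∑ γ ∈ Finset.Iic K, g β γ := by
  rw [← sum_Iic_assoc K (fun β γ _ => g β γ)]
  refine Finset.sum_congr rfl fun β hβ => ?_
  refine Finset.sum_subset (Finset.Iic_subset_Iic.2 tsub_le_self) fun γ _ hγ => ?_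
  refine hvanish β γ fun hle => hγ (Finset.mem_Iic.2 ?_)
  exact le_tsub_of_add_le_left hle

end Aux

section ConvRing

variable {p : ℕ} {R : Type*} [Ring R]

lemma one_sconv (f : MIdx p → R) : sconv one' f = f := by
  funext α
  rw [sconv, Finset.sum_eq_single_of_mem 0 (Finset.mem_Iic.2 zero_le)]
  · simp [one']
  · intro b _ hb; simp [one', hb]

lemma sconv_one (f : MIdx p → R) : sconv f one' = f := by
  funext α
  rw [sconv, Finset.sum_eq_single_of_mem α (Finset.mem_Iic.2 le_rfl)]
  · simp [one']
  · intro b hb hbne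
    have : α - b ≠ 0 := fun hz =>
      hbne (le_antisymm (Finset.mem_Iic.1 hb) (tsub_eq_zero_iff_le.1 hz))
    simp [one', this]

lemma sconv_assoc (f g h : MIdx p → R) : sconv (sconv f g) h = sconv f (sconv g h) := by
  funext α
  have lhs : sconv (sconv f g) h α
      = ∑ δ ∈ Finset.Iic α, ∑ β ∈ Finset.Iic δ, f β * g (δ - β) * h (α - δ) := by
    rw [sconv]
    exact Finset.sum_congr rfl fun δ _ => by rw [sconv, Finset.sum_mul]
  have rhs : sconv f (sconv g h) α
      = ∑ β ∈ Finset.Iic α, ∑ γ ∈ Finset.Iic (α - β), f β * g γ * h (α - β - γ) := by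
    rw [sconv]
    refine Finset.sum_congr rfl fun β _ => ?_
    rw [sconv, Finset.mul_sum]
    exact Finset.sum_congr rfl fun γ _ => (mul_assoc _ _ _).symm
  rw [lhs, rhs, sum_Iic_assoc α (fun x y z => f x * g y * h z)]

noncomputable def linv (f : MIdx p → R) : MIdx p → R := fun α =>
  (if α = 0 then 1 else 0) -
    ∑ β ∈ ((Finset.Iic α).erase 0).attach, f β.1 * linv f (α - β.1)
termination_by α => wt α
decreasing_by
  have h := β.2
  rw [Finset.mem_erase, Finset.mem_Iic] at h
  exact wt_tsub_lt h.2 h.1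

noncomputable def rinv (f : MIdx p → R) : MIdx p → R := fun α =>
  (if α = 0 then 1 else 0) -
    ∑ β ∈ ((Finset.Iic α).erase α).attach, rinv f β.1 * f (α - β.1)
termination_by α => wt α
decreasing_by
  have h := β.2
  rw [Finset.mem_erase, Finset.mem_Iic] at h
  exact wt_lt_of_lt h.2 h.1

lemma sconv_linv {f : MIdx p → R} (hf : f 0 = 1) : sconv f (linv f) = one' := by
  funext α
  rw [sconv, ← Finset.add_sum_erase _ _ (Finset.mem_Iic.2 zero_le)]
  rw [hf, one_mul, tsub_zero]
  conv_lhs => rw [linv]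
  rw [Finset.sum_attach ((Finset.Iic α).erase 0) (fun β => f β * linv f (α - β))]
  simp [one']

lemma rinv_sconv {f : MIdx p → R} (hf : f 0 = 1) : sconv (rinv f) f = one' := by
  funext α
  rw [sconv, ← Finset.add_sum_erase _ _ (Finset.mem_Iic.2 (le_refl α))]
  rw [tsub_self, hf, mul_one]
  conv_lhs => rw [rinv]
  rw [Finset.sum_attach ((Finset.Iic α).erase α) (fun β => rinv f β * f (α - β))]
  simp [one']

lemma linv_sconv {f : MIdx p → R} (hf : f 0 = 1) : sconv (linv f) f = one' := by
  have he : linv f = rinv f := by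
    calc linv f = sconv one' (linv f) := (one_sconv _).symm
      _ = sconv (sconv (rinv f) f) (linv f) := by rw [rinv_sconv hf]
      _ = sconv (rinv f) (sconv f (linv f)) := sconv_assoc _ _ _
      _ = sconv (rinv f) one' := by rw [sconv_linv hf]
      _ = rinv f := sconv_one _
  rw [he]; exact rinv_sconv hf

end ConvRing

section CoidealHS

variable {p : ℕ} {Δ : Set (MIdx p)}

lemma IsCoideal.zero_mem (hΔ : IsCoideal Δ) : (0 : MIdx p) ∈ Δ := by
  obtain ⟨x, hx⟩ := hΔ.1
  exact hΔ.2 hx zero_le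

lemma IsCoideal.mem_of_le (hΔ : IsCoideal Δ) {α β : MIdx p} (hα : α ∈ Δ) (h : β ≤ α) :
    β ∈ Δ := hΔ.2 hα h

lemma IsCoideal.sub_mem (hΔ : IsCoideal Δ) {α : MIdx p} (hα : α ∈ Δ) (β : MIdx p) :
    α - β ∈ Δ := hΔ.2 hα tsub_le_self

variable {k A : Type*} [CommRing k] [CommRing A] [Algebra k A]
variable {D E : MIdx p → Module.End k A}

lemma IsHS.map_one' (hD : IsHS k A Δ D) (hΔ : IsCoideal Δ) :
    ∀ α ∈ Δ, D α 1 = if α = 0 then 1 else 0 := by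
  suffices H : ∀ n : ℕ, ∀ α ∈ Δ, wt α = n → D α 1 = if α = 0 then 1 else 0 by
    intro α hα; exact H (wt α) α hα rfl
  intro n
  induction n using Nat.strong_induction_on with
  | _ n IH =>
    intro α hα hwt
    by_cases h0 : α = 0
    · subst h0; simp [hD.1]
    · rw [if_neg h0]
      have hl : D α 1 = ∑ β ∈ Finset.Iic α, D β 1 * D (α - β) 1 := by
        have := hD.2 α hα 1 1; rwa [mul_one] at this
      have hsum : ∑ β ∈ Finset.Iic α, D β 1 * D (α - β) 1
          = (D 0 1 * D (α - 0) 1) + (D α 1 * D (α - α) 1) := by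
        refine Finset.sum_eq_add_of_mem 0 α (Finset.mem_Iic.2 zero_le)
          (Finset.mem_Iic.2 le_rfl) (Ne.symm h0) ?_
        intro c hc ⟨hc0, hcα⟩
        have hcle := Finset.mem_Iic.1 hc
        have : D c 1 = if c = 0 then 1 else 0 :=
          IH (wt c) (hwt ▸ wt_lt_of_lt hcle hcα) c (hΔ.mem_of_le hα hcle) rfl
        rw [this, if_neg hc0, zero_mul]
      rw [hsum, tsub_zero, tsub_self, hD.1] at hl
      simp only [Module.End.one_apply, one_mul, mul_one] at hl
      have h3 : D α 1 + D α 1 = D α 1 + 0 := by rw [add_zero]; exact hl.symm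
      exact (add_left_cancel h3)

lemma IsHS.sconv_isHS (hΔ : IsCoideal Δ) (hD : IsHS k A Δ D) (hE : IsHS k A Δ E) :
    IsHS k A Δ (sconv D E) := by
  constructor
  · show sconv D E 0 = 1
    rw [sconv]
    rw [show (∑ β ∈ Finset.Iic (0:MIdx p), D β * E (0 - β)) = D 0 * E (0 - 0) from
      sum_Iic_zero _]
    simp [hD.1, hE.1]
  · intro α hα x y
    have lhs : sconv D E α (x * y)
        = ∑ u ∈ Finset.Iic α, ∑ c ∈ Finset.Iic (α - u), ∑ i ∈ Finset.Iic u,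
            D i (E c x) * D (u - i) (E (α - u - c) y) := by
      rw [sconv, LinearMap.sum_apply]
      refine Finset.sum_congr rfl fun u hu => ?_
      have hu' : u ∈ Δ := hΔ.mem_of_le hα (Finset.mem_Iic.1 hu)
      have hau : α - u ∈ Δ := hΔ.sub_mem hα u
      rw [Module.End.mul_apply, hE.2 _ hau x y, map_sum]
      exact Finset.sum_congr rfl fun c _ => hD.2 _ hu' _ _
    have rhs : ∑ β ∈ Finset.Iic α, sconv D E β x * sconv D E (α - β) y
        = ∑ β ∈ Finset.Iic α, ∑ i ∈ Finset.Iic β, ∑ j ∈ Finset.Iic (α - β),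
            D i (E (β - i) x) * D j (E (α - β - j) y) := by
      refine Finset.sum_congr rfl fun β _ => ?_
      rw [sconv, sconv, LinearMap.sum_apply, LinearMap.sum_apply, Finset.sum_mul]
      refine Finset.sum_congr rfl fun i _ => ?_
      rw [Finset.mul_sum]
      refine Finset.sum_congr rfl fun j _ => ?_
      rw [Module.End.mul_apply, Module.End.mul_apply]
    rw [lhs, rhs, sum_P1 α (fun i c j z => D i (E c x) * D j (E z y)),
      sum_P2 α (fun i c j z => D i (E c x) * D j (E z y))]

end CoidealHS

noncomputable section Construction

variable (k A : Type*) [CommRing k] [CommRing A] [Algebra k A]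
variable {p : ℕ} (Δ : Set (MIdx p)) (D : MIdx p → Module.End k A)

/-- `Ω[A/k][[s]]_Δ` as a module over `A` via `D̃` -/
def Ser (_ : IsCoideal Δ) (_ : IsHS k A Δ D) : Type _ :=
  ↥Δ → KaehlerDifferential k A

variable {Δ D} {hΔ : IsCoideal Δ} {hD : IsHS k A Δ D}
variable {k A}

instance : AddCommGroup (Ser k A Δ D hΔ hD) :=
  inferInstanceAs (AddCommGroup (↥Δ → KaehlerDifferential k A))

instance : Module k (Ser k A Δ D hΔ hD) :=
  inferInstanceAs (Module k (↥Δ → KaehlerDifferential k A))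

/-- extension by zero of an element of `Ser` to all multi-indices -/
def Ser.ext' (n : Ser k A Δ D hΔ hD) : MIdx p → KaehlerDifferential k A :=
  fun ρ => if h : ρ ∈ Δ then n ⟨ρ, h⟩ else 0

lemma Ser.ext'_add (n m : Ser k A Δ D hΔ hD) (ρ : MIdx p) :
    (n + m).ext' ρ = n.ext' ρ + m.ext' ρ := by
  unfold Ser.ext'
  by_cases h : ρ ∈ Δ
  · rw [dif_pos h, dif_pos h, dif_pos h]; rfl
  · rw [dif_neg h, dif_neg h, dif_neg h, add_zero]

lemma Ser.ext'_smul (c : k) (n : Ser k A Δ D hΔ hD) (ρ : MIdx p) :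
    (c • n).ext' ρ = c • n.ext' ρ := by
  unfold Ser.ext'
  by_cases h : ρ ∈ Δ
  · rw [dif_pos h, dif_pos h]; rfl
  · rw [dif_neg h, dif_neg h, smul_zero]

lemma Ser.ext'_zero (ρ : MIdx p) : (0 : Ser k A Δ D hΔ hD).ext' ρ = 0 := by
  unfold Ser.ext'
  by_cases h : ρ ∈ Δ
  · rw [dif_pos h]; rfl
  · rw [dif_neg h]

lemma Ser.ext'_mem (n : Ser k A Δ D hΔ hD) {ρ : MIdx p} (h : ρ ∈ Δ) :
    n.ext' ρ = n ⟨ρ, h⟩ := dif_pos h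

instance : SMul A (Ser k A Δ D hΔ hD) :=
  ⟨fun a n α => ∑ β ∈ Finset.Iic α.1, D β a • n.ext' (α.1 - β)⟩

lemma Ser.smul_def (a : A) (n : Ser k A Δ D hΔ hD) (α : ↥Δ) :
    (a • n) α = ∑ β ∈ Finset.Iic α.1, D β a • n.ext' (α.1 - β) := rfl

instance : Module A (Ser k A Δ D hΔ hD) where
  one_smul n := by
    funext α
    rw [Ser.smul_def, Finset.sum_eq_single_of_mem 0 (Finset.mem_Iic.2 zero_le)]
    · rw [hD.map_one' hΔ 0 hΔ.zero_mem, if_pos rfl, one_smul, tsub_zero,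
        Ser.ext'_mem n α.2]
    · intro β hβ hβ0
      rw [hD.map_one' hΔ β (hΔ.mem_of_le α.2 (Finset.mem_Iic.1 hβ)), if_neg hβ0, zero_smul]
  mul_smul a b n := by
    funext α
    have lhs : ((a * b) • n) α
        = ∑ u ∈ Finset.Iic α.1, ∑ i ∈ Finset.Iic u,
            (D i a * D (u - i) b) • n.ext' (α.1 - u) := by
      rw [Ser.smul_def]
      refine Finset.sum_congr rfl fun u hu => ?_
      rw [hD.2 u (hΔ.mem_of_le α.2 (Finset.mem_Iic.1 hu)) a b, Finset.sum_smul]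
    have rhs : (a • b • n) α
        = ∑ i ∈ Finset.Iic α.1, ∑ j ∈ Finset.Iic (α.1 - i),
            (D i a * D j b) • n.ext' (α.1 - i - j) := by
      rw [Ser.smul_def]
      refine Finset.sum_congr rfl fun i _ => ?_
      rw [Ser.ext'_mem (b • n) (hΔ.sub_mem α.2 i), Ser.smul_def, Finset.smul_sum]
      refine Finset.sum_congr rfl fun j _ => ?_
      rw [smul_smul]
    rw [lhs, rhs, sum_Iic_assoc α.1 (fun i j ρ => (D i a * D j b) • Ser.ext' n ρ)]
  smul_zero a := by
    funext α
    rw [Ser.smul_def]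
    refine Finset.sum_eq_zero fun β _ => ?_
    rw [Ser.ext'_zero, smul_zero]
  smul_add a n m := by
    funext α
    show _ = (a • n) α + (a • m) α
    rw [Ser.smul_def, Ser.smul_def, Ser.smul_def, ← Finset.sum_add_distrib]
    refine Finset.sum_congr rfl fun β _ => ?_
    rw [Ser.ext'_add, smul_add]
  add_smul a b n := by
    funext α
    show _ = (a • n) α + (b • n) α
    rw [Ser.smul_def, Ser.smul_def, Ser.smul_def, ← Finset.sum_add_distrib]
    refine Finset.sum_congr rfl fun β _ => ?_
    rw [map_add, add_smul]
  zero_smul n := by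
    funext α
    rw [Ser.smul_def]
    refine Finset.sum_eq_zero fun β _ => ?_
    rw [map_zero, zero_smul]

instance : IsScalarTower k A (Ser k A Δ D hΔ hD) := by
  constructor
  intro c a n
  funext α
  show ((c • a) • n) α = c • ((a • n) α)
  rw [Ser.smul_def, Ser.smul_def]
  have hsum : c • (∑ β ∈ Finset.Iic α.1, D β a • Ser.ext' n (α.1 - β))
      = ∑ β ∈ Finset.Iic α.1, c • (D β a • Ser.ext' n (α.1 - β)) := by
    induction (Finset.Iic α.1) using Finset.induction with
    | empty => simp
    | @insert β' s' h ih =>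
        rw [Finset.sum_insert h, Finset.sum_insert h, ← ih]
        exact smul_add c (D β' a • Ser.ext' n (α.1 - β')) (∑ β ∈ s', D β a • Ser.ext' n (α.1 - β))
  rw [hsum]
  refine Finset.sum_congr rfl fun β _ => ?_
  rw [LinearMap.map_smul, smul_assoc]

/-- the coefficientwise derivation `a ↦ (d(D_α a))_α`, as a linear map -/
def serDlin (hΔ : IsCoideal Δ) (hD : IsHS k A Δ D) :
    A →ₗ[k] (Ser k A Δ D hΔ hD) where
  toFun := fun a => fun α => KaehlerDifferential.D k A (D α.1 a)
  map_add' := fun a b => funext fun α => by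
    show KaehlerDifferential.D k A (D α.1 (a + b))
      = KaehlerDifferential.D k A (D α.1 a) + KaehlerDifferential.D k A (D α.1 b)
    rw [map_add, map_add]
  map_smul' := fun c a => funext fun α => by
    show KaehlerDifferential.D k A (D α.1 (c • a))
      = c • KaehlerDifferential.D k A (D α.1 a)
    rw [LinearMap.map_smul, Derivation.map_smul]

lemma serDlin_apply (hΔ : IsCoideal Δ) (hD : IsHS k A Δ D) (a : A) (α : ↥Δ) :
    serDlin hΔ hD a α = KaehlerDifferential.D k A (D α.1 a) := rfl

/-- the coefficientwise derivation `a ↦ (d(D_α a))_α` -/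
def serD (hΔ : IsCoideal Δ) (hD : IsHS k A Δ D) :
    Derivation k A (Ser k A Δ D hΔ hD) where
  toLinearMap := serDlin hΔ hD
  map_one_eq_zero' := by
    funext α
    show serDlin hΔ hD 1 α = (0 : Ser k A Δ D hΔ hD) α
    rw [serDlin_apply]
    show _ = (0 : KaehlerDifferential k A)
    rw [hD.map_one' hΔ α.1 α.2]
    split
    · exact Derivation.map_one_eq_zero _
    · exact Derivation.map_zero _
  leibniz' a b := by
    funext α
    show serDlin hΔ hD (a * b) α
      = (a • serDlin hΔ hD b) α + (b • serDlin hΔ hD a) α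
    rw [serDlin_apply, hD.2 α.1 α.2 a b, map_sum]
    have step : ∀ β ∈ Finset.Iic α.1,
        KaehlerDifferential.D k A (D β a * D (α.1 - β) b)
          = D β a • KaehlerDifferential.D k A (D (α.1 - β) b)
            + D (α.1 - β) b • KaehlerDifferential.D k A (D β a) := by
      intro β _; exact Derivation.leibniz _ _ _
    rw [Finset.sum_congr rfl step, Finset.sum_add_distrib,
      Ser.smul_def, Ser.smul_def]
    congr 1
    · refine Finset.sum_congr rfl fun β _ => ?_
      rw [Ser.ext'_mem _ (hΔ.sub_mem α.2 β), serDlin_apply]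
    · rw [← sum_Iic_swap α.1
        (fun x y => D x b • KaehlerDifferential.D k A (D y a))]
      refine Finset.sum_congr rfl fun β _ => ?_
      rw [Ser.ext'_mem _ (hΔ.sub_mem α.2 β), serDlin_apply]

/-- the coefficients of fLie -/
def psi (hΔ : IsCoideal Δ) (hD : IsHS k A Δ D) :
    MIdx p → Module.End k (KaehlerDifferential k A) := fun α =>
  if h : α ∈ Δ then
    { toFun := fun ω => ((serD hΔ hD).liftKaehlerDifferential ω) ⟨α, h⟩
      map_add' := fun x y => by
        show ((serD hΔ hD).liftKaehlerDifferential (x + y)) ⟨α, h⟩ = _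
        rw [map_add]
        rfl
      map_smul' := fun c ω => by
        show ((serD hΔ hD).liftKaehlerDifferential (c • ω)) ⟨α, h⟩ = _
        rw [LinearMap.map_smul_of_tower]
        rfl }
  else 0

lemma psi_not_mem {α : MIdx p} (h : α ∉ Δ) : psi hΔ hD α = 0 := dif_neg h

lemma psi_apply_smul {α : MIdx p} (h : α ∈ Δ) (a b : A) :
    psi hΔ hD α (a • KaehlerDifferential.D k A b)
      = ∑ β ∈ Finset.Iic α, D β a • KaehlerDifferential.D k A (D (α - β) b) := by
  rw [psi, dif_pos h]
  show ((serD hΔ hD).liftKaehlerDifferential (a • KaehlerDifferential.D k A b)) ⟨α, h⟩ = _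
  rw [LinearMap.map_smul, Derivation.liftKaehlerDifferential_comp_D]
  rw [show ((a • serD hΔ hD b) ⟨α, h⟩) = _ from Ser.smul_def a _ ⟨α, h⟩]
  refine Finset.sum_congr rfl fun β _ => ?_
  rw [Ser.ext'_mem _ (hΔ.sub_mem h β)]
  rfl

end Construction

section PsiLemmas

variable {k A : Type*} [CommRing k] [CommRing A] [Algebra k A]
variable {p : ℕ} {Δ : Set (MIdx p)} {D E : MIdx p → Module.End k A}
variable {hΔ : IsCoideal Δ} {hD : IsHS k A Δ D}

lemma omega_ind {motive : KaehlerDifferential k A → Prop}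
    (h0 : motive 0) (hadd : ∀ x y, motive x → motive y → motive (x + y))
    (hgen : ∀ a b : A, motive (a • KaehlerDifferential.D k A b)) :
    ∀ ω, motive ω := by
  set G : Set (KaehlerDifferential k A) :=
    {x | ∃ a b : A, x = a • KaehlerDifferential.D k A b} with hG
  have hS : ∀ (a : A) x, x ∈ AddSubmonoid.closure G → a • x ∈ AddSubmonoid.closure G := by
    intro a x hx
    refine AddSubmonoid.closure_induction
      (motive := fun x _ => a • x ∈ AddSubmonoid.closure G) ?_ ?_ ?_ hx
    · rintro x ⟨b, c, rfl⟩
      show a • (b • KaehlerDifferential.D k A c) ∈ AddSubmonoid.closure G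
      rw [smul_smul]
      exact AddSubmonoid.subset_closure ⟨a * b, c, rfl⟩
    · show a • (0 : KaehlerDifferential k A) ∈ AddSubmonoid.closure G
      rw [smul_zero]; exact AddSubmonoid.zero_mem _
    · intro x y _ _ hx hy
      show a • (x + y) ∈ AddSubmonoid.closure G
      rw [smul_add]; exact AddSubmonoid.add_mem _ hx hy
  have hmem : ∀ ω : KaehlerDifferential k A, ω ∈ AddSubmonoid.closure G := by
    set S : Submodule A (KaehlerDifferential k A) :=
      { toAddSubmonoid := AddSubmonoid.closure G
        smul_mem' := hS } with hSdef
    intro ω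
    have hle : Submodule.span A (Set.range (KaehlerDifferential.D k A)) ≤ S := by
      rw [Submodule.span_le]
      rintro _ ⟨b, rfl⟩
      exact AddSubmonoid.subset_closure ⟨1, b, (one_smul A _).symm⟩
    have : ω ∈ Submodule.span A (Set.range (KaehlerDifferential.D k A)) := by
      rw [KaehlerDifferential.span_range_derivation]; trivial
    exact hle this
  intro ω
  exact AddSubmonoid.closure_induction (motive := fun x _ => motive x)
    (by rintro x ⟨a, b, rfl⟩; exact hgen a b) h0 (fun x y _ _ => hadd x y) (hmem ω)

lemma psi_d {α : MIdx p} (h : α ∈ Δ) (b : A) :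
    psi hΔ hD α (KaehlerDifferential.D k A b)
      = KaehlerDifferential.D k A (D α b) := by
  rw [← one_smul A (KaehlerDifferential.D k A b), psi_apply_smul h,
    Finset.sum_eq_single_of_mem 0 (Finset.mem_Iic.2 zero_le)]
  · rw [hD.map_one' hΔ 0 hΔ.zero_mem, if_pos rfl, tsub_zero, one_smul]
  · intro β hβ hβ0
    rw [hD.map_one' hΔ β (hΔ.mem_of_le h (Finset.mem_Iic.1 hβ)), if_neg hβ0, zero_smul]

lemma psi_zero (h0 : (0 : MIdx p) ∈ Δ) : psi hΔ hD 0 = 1 := by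
  refine LinearMap.ext (omega_ind ?_ ?_ ?_)
  · rw [map_zero]; rfl
  · intro x y hx hy
    rw [map_add, hx, hy, Module.End.one_apply, Module.End.one_apply, Module.End.one_apply]
  · intro a b
    rw [psi_apply_smul h0, sum_Iic_zero
      (fun β => D β a • KaehlerDifferential.D k A (D (0 - β) b)), Module.End.one_apply]
    have : (0 : MIdx p) - 0 = 0 := tsub_zero 0
    rw [this, hD.1, Module.End.one_apply, Module.End.one_apply]

/-- semilinearity of `psi` -/
lemma psi_smul {α : MIdx p} (h : α ∈ Δ) (a : A) (ω : KaehlerDifferential k A) :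
    psi hΔ hD α (a • ω) = ∑ β ∈ Finset.Iic α, D β a • psi hΔ hD (α - β) ω := by
  induction ω using omega_ind with
  | h0 =>
    rw [smul_zero, map_zero]
    exact (Finset.sum_eq_zero fun β _ => by rw [map_zero, smul_zero]).symm
  | hadd x y hx hy =>
    rw [smul_add, map_add, hx, hy, ← Finset.sum_add_distrib]
    exact Finset.sum_congr rfl fun β _ => by rw [map_add, smul_add]
  | hgen b c =>
    rw [smul_smul, psi_apply_smul h]
    have lhs : ∑ u ∈ Finset.Iic α, D u (a * b) • KaehlerDifferential.D k A (D (α - u) c)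
        = ∑ u ∈ Finset.Iic α, ∑ i ∈ Finset.Iic u,
            (D i a * D (u - i) b) • KaehlerDifferential.D k A (D (α - u) c) := by
      refine Finset.sum_congr rfl fun u hu => ?_
      rw [hD.2 u (hΔ.mem_of_le h (Finset.mem_Iic.1 hu)) a b, Finset.sum_smul]
    have rhs : ∑ β ∈ Finset.Iic α, D β a • psi hΔ hD (α - β) (b • KaehlerDifferential.D k A c)
        = ∑ β ∈ Finset.Iic α, ∑ v ∈ Finset.Iic (α - β),
            (D β a * D v b) • KaehlerDifferential.D k A (D (α - β - v) c) := by
      refine Finset.sum_congr rfl fun β _ => ?_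
      rw [psi_apply_smul (hΔ.sub_mem h β), Finset.smul_sum]
      exact Finset.sum_congr rfl fun v _ => by rw [smul_smul]
    rw [lhs, rhs, sum_Iic_assoc α
      (fun i j ρ => (D i a * D j b) • KaehlerDifferential.D k A (D ρ c))]

lemma psi_congr {hE : IsHS k A Δ E} (hDE : ∀ α ∈ Δ, D α = E α) {α : MIdx p} (h : α ∈ Δ) :
    psi hΔ hD α = psi hΔ hE α := by
  refine LinearMap.ext (omega_ind ?_ ?_ ?_)
  · rw [map_zero, map_zero]
  · intro x y hx hy; rw [map_add, map_add, hx, hy]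
  · intro a b
    rw [psi_apply_smul h, psi_apply_smul h]
    refine Finset.sum_congr rfl fun β hβ => ?_
    rw [hDE β (hΔ.mem_of_le h (Finset.mem_Iic.1 hβ)),
      hDE (α - β) (hΔ.sub_mem h β)]

lemma psi_mul {hE : IsHS k A Δ E} {α : MIdx p} (h : α ∈ Δ) :
    psi hΔ (IsHS.sconv_isHS hΔ hD hE) α = sconv (psi hΔ hD) (psi hΔ hE) α := by
  refine LinearMap.ext (omega_ind ?_ ?_ ?_)
  · rw [map_zero, sconv, LinearMap.sum_apply]
    exact (Finset.sum_eq_zero fun β _ => by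
      rw [Module.End.mul_apply, map_zero, map_zero]).symm
  · intro x y hx hy
    rw [map_add, hx, hy, ← map_add]
  · intro a b
    have lhs : psi hΔ (IsHS.sconv_isHS hΔ hD hE) α (a • KaehlerDifferential.D k A b)
        = ∑ β ∈ Finset.Iic α, ∑ i ∈ Finset.Iic β, ∑ j ∈ Finset.Iic (α - β),
            D i (E (β - i) a) • KaehlerDifferential.D k A (D j (E (α - β - j) b)) := by
      rw [psi_apply_smul h]
      refine Finset.sum_congr rfl fun β _ => ?_
      simp only [sconv, LinearMap.sum_apply, Module.End.mul_apply, map_sum]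
      rw [Finset.sum_smul]
      refine Finset.sum_congr rfl fun i _ => ?_
      rw [Finset.smul_sum]
    have rhs : sconv (psi hΔ hD) (psi hΔ hE) α (a • KaehlerDifferential.D k A b)
        = ∑ u ∈ Finset.Iic α, ∑ c ∈ Finset.Iic (α - u), ∑ i ∈ Finset.Iic u,
            D i (E c a) • KaehlerDifferential.D k A (D (u - i) (E (α - u - c) b)) := by
      rw [sconv, LinearMap.sum_apply]
      refine Finset.sum_congr rfl fun u hu => ?_
      have hu' : u ∈ Δ := hΔ.mem_of_le h (Finset.mem_Iic.1 hu)
      rw [Module.End.mul_apply, psi_apply_smul (hΔ.sub_mem h u), map_sum]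
      refine Finset.sum_congr rfl fun c _ => ?_
      rw [psi_smul hu']
      refine Finset.sum_congr rfl fun i _ => ?_
      rw [psi_d (hΔ.sub_mem hu' i)]
    rw [lhs, rhs, sum_P1 α (fun i c j z =>
        D i (E c a) • KaehlerDifferential.D k A (D j (E z b))),
      sum_P2 α (fun i c j z =>
        D i (E c a) • KaehlerDifferential.D k A (D j (E z b)))]

end PsiLemmas

section Subst

variable {k A : Type*} [CommRing k] [CommRing A] [Algebra k A]
variable {p q : ℕ} {Δ : Set (MIdx p)} {nab : Set (MIdx q)}
variable {D : MIdx p → Module.End k A}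
variable (φ : SubstMap A p q Δ nab)

lemma SubstMap.C_zero_of_wt_lt {u : MIdx q} (hu : u ∈ nab) {β : MIdx p}
    (h : wt u < wt β) : φ.C β u = 0 := by
  by_cases hβ : β ∈ Δ
  · exact φ.c_ord β hβ u hu h
  · exact φ.c_suppL β hβ u

lemma SubstMap.C_zero_of_not_le {u : MIdx q} (hu : u ∈ nab) {β : MIdx p}
    (h : ¬ β ≤ (fun _ => wt u : MIdx p)) : φ.C β u = 0 :=
  φ.C_zero_of_wt_lt hu (wt_lt_of_not_le_const h)

lemma SubstMap.sum_extend {M : Type*} [AddCommMonoid M] [Module A M] {u : MIdx q}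
    (hu : u ∈ nab) {n : ℕ} (h : wt u ≤ n) (g : MIdx p → M) :
    ∑ β ∈ Finset.Iic (fun _ => wt u : MIdx p), φ.C β u • g β
      = ∑ β ∈ Finset.Iic (fun _ => n : MIdx p), φ.C β u • g β := by
  refine Finset.sum_subset (Finset.Iic_subset_Iic.2 (fun i => h)) fun β _ hβ => ?_
  rw [φ.C_zero_of_not_le hu (fun hle => hβ (Finset.mem_Iic.2 hle)), zero_smul]

lemma SubstMap.C_conv (hΔ : IsCoideal Δ) {e : MIdx q} (he : e ∈ nab) (β γ : MIdx p) :
    ∑ u ∈ Finset.Iic e, φ.C β u * φ.C γ (e - u) = φ.C (β + γ) e := by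
  by_cases hβ : β ∈ Δ
  · by_cases hγ : γ ∈ Δ
    · exact (φ.c_mul β hβ γ hγ e he).symm
    · have h1 : β + γ ∉ Δ := fun hm => hγ (hΔ.mem_of_le hm le_add_self)
      rw [φ.c_suppL _ h1]
      exact Finset.sum_eq_zero fun u _ => by rw [φ.c_suppL γ hγ, mul_zero]
  · have h1 : β + γ ∉ Δ := fun hm => hβ (hΔ.mem_of_le hm le_self_add)
    rw [φ.c_suppL _ h1]
    exact Finset.sum_eq_zero fun u _ => by rw [φ.c_suppL β hβ, zero_mul]

lemma SubstMap.bulletEnd_apply (e : MIdx q) (x : A) :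
    φ.bulletEnd D e x
      = ∑ α ∈ Finset.Iic (fun _ => wt e : MIdx p), φ.C α e • D α x := by
  rw [SubstMap.bulletEnd, LinearMap.sum_apply]
  exact Finset.sum_congr rfl fun α _ => rfl

lemma SubstMap.bullet_isHS (hΔ : IsCoideal Δ) (hq : IsCoideal nab)
    (hD : IsHS k A Δ D) : IsHS k A nab (φ.bulletEnd D) := by
  constructor
  · refine LinearMap.ext fun x => ?_
    rw [φ.bulletEnd_apply 0 x]
    have hK : (fun _ => wt (0 : MIdx q) : MIdx p) = 0 := by
      funext i; simp
    rw [hK, sum_Iic_zero (fun α => φ.C α 0 • D α x),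
      φ.c_zero 0 hq.zero_mem, if_pos rfl, one_smul, hD.1]
  · intro e he x y
    set K : MIdx p := (fun _ => wt e) with hK
    have lhs : φ.bulletEnd D e (x * y)
        = ∑ β ∈ Finset.Iic K, ∑ γ ∈ Finset.Iic K,
            φ.C (β + γ) e • (D β x * D γ y) := by
      rw [φ.bulletEnd_apply e (x * y)]
      have step : ∀ α ∈ Finset.Iic K, φ.C α e • D α (x * y)
          = ∑ β ∈ Finset.Iic α, φ.C (β + (α - β)) e • (D β x * D (α - β) y) := by
        intro α _
        by_cases hα : α ∈ Δ
        · rw [hD.2 α hα x y, Finset.smul_sum]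
          exact Finset.sum_congr rfl fun β hβ => by
            rw [add_tsub_cancel_of_le (Finset.mem_Iic.1 hβ)]
        · rw [φ.c_suppL α hα e, zero_smul]
          exact (Finset.sum_eq_zero fun β hβ => by
            rw [add_tsub_cancel_of_le (Finset.mem_Iic.1 hβ), φ.c_suppL α hα e,
              zero_smul]).symm
      rw [Finset.sum_congr rfl step,
        sum_Iic_pairs K (fun β γ => φ.C (β + γ) e • (D β x * D γ y))
          (fun β γ h => by
            show φ.C (β + γ) e • (D β x * D γ y) = 0
            rw [φ.C_zero_of_not_le he h, zero_smul])]
    have rhs : ∑ u ∈ Finset.Iic e, φ.bulletEnd D u x * φ.bulletEnd D (e - u) y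
        = ∑ β ∈ Finset.Iic K, ∑ γ ∈ Finset.Iic K,
            φ.C (β + γ) e • (D β x * D γ y) := by
      have step : ∀ u ∈ Finset.Iic e,
          φ.bulletEnd D u x * φ.bulletEnd D (e - u) y
            = ∑ β ∈ Finset.Iic K, ∑ γ ∈ Finset.Iic K,
                (φ.C β u * φ.C γ (e - u)) • (D β x * D γ y) := by
        intro u hu
        have hu' : u ∈ nab := hq.mem_of_le he (Finset.mem_Iic.1 hu)
        have heu : e - u ∈ nab := hq.sub_mem he u
        rw [φ.bulletEnd_apply u x, φ.bulletEnd_apply (e - u) y,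
          φ.sum_extend hu' (wt_le_of_le (Finset.mem_Iic.1 hu)) (fun β => D β x),
          φ.sum_extend heu (wt_le_of_le tsub_le_self) (fun γ => D γ y),
          Finset.sum_mul]
        refine Finset.sum_congr rfl fun β _ => ?_
        rw [Finset.mul_sum]
        refine Finset.sum_congr rfl fun γ _ => ?_
        simp only [smul_eq_mul]
        ring
      rw [Finset.sum_congr rfl step, Finset.sum_comm]
      refine Finset.sum_congr rfl fun β _ => ?_
      rw [Finset.sum_comm]
      refine Finset.sum_congr rfl fun γ _ => ?_
      simp only [smul_eq_mul, ← Finset.sum_mul]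
      rw [φ.C_conv hΔ he β γ]
    rw [lhs, rhs]

lemma d_const_smul {c : A} (hc : c ∈ Set.range (algebraMap k A)) (x : A) :
    KaehlerDifferential.D k A (c • x) = c • KaehlerDifferential.D k A x := by
  obtain ⟨c₀, rfl⟩ := hc
  rw [algebraMap_smul, Derivation.map_smul, algebraMap_smul]

lemma psi_bullet (hΔ : IsCoideal Δ) (hq : IsCoideal nab) (hD : IsHS k A Δ D)
    (hconst : φ.HasConstCoeffs k) {e : MIdx q} (he : e ∈ nab)
    (x : KaehlerDifferential k A) :
    psi hq (φ.bullet_isHS hΔ hq hD) e x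
      = ∑ α ∈ Finset.Iic (fun _ => wt e : MIdx p), φ.C α e • psi hΔ hD α x := by
  induction x using omega_ind with
  | h0 =>
    rw [map_zero]
    exact (Finset.sum_eq_zero fun α _ => by rw [map_zero, smul_zero]).symm
  | hadd x y hx hy =>
    rw [map_add, hx, hy, ← Finset.sum_add_distrib]
    exact Finset.sum_congr rfl fun α _ => by rw [map_add, smul_add]
  | hgen a b =>
    set K : MIdx p := (fun _ => wt e) with hK
    have lhs : psi hq (φ.bullet_isHS hΔ hq hD) e (a • KaehlerDifferential.D k A b)
        = ∑ β ∈ Finset.Iic K, ∑ γ ∈ Finset.Iic K,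
            (φ.C (β + γ) e * D β a) • KaehlerDifferential.D k A (D γ b) := by
      rw [psi_apply_smul he]
      have step : ∀ u ∈ Finset.Iic e,
          φ.bulletEnd D u a • KaehlerDifferential.D k A (φ.bulletEnd D (e - u) b)
            = ∑ β ∈ Finset.Iic K, ∑ γ ∈ Finset.Iic K,
                (φ.C β u * φ.C γ (e - u) * D β a)
                  • KaehlerDifferential.D k A (D γ b) := by
        intro u hu
        have hu' : u ∈ nab := hq.mem_of_le he (Finset.mem_Iic.1 hu)
        have heu : e - u ∈ nab := hq.sub_mem he u
        rw [φ.bulletEnd_apply u a, φ.bulletEnd_apply (e - u) b,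
          φ.sum_extend hu' (wt_le_of_le (Finset.mem_Iic.1 hu)) (fun β => D β a),
          φ.sum_extend heu (wt_le_of_le tsub_le_self) (fun γ => D γ b),
          map_sum, Finset.sum_smul]
        refine Finset.sum_congr rfl fun β _ => ?_
        rw [Finset.smul_sum]
        refine Finset.sum_congr rfl fun γ _ => ?_
        rw [d_const_smul (hconst γ (e - u)) (D γ b), smul_smul]
        congr 1
        simp only [smul_eq_mul]
        ring
      rw [Finset.sum_congr rfl step, Finset.sum_comm]
      refine Finset.sum_congr rfl fun β _ => ?_
      rw [Finset.sum_comm]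
      refine Finset.sum_congr rfl fun γ _ => ?_
      rw [← Finset.sum_smul, ← Finset.sum_mul, φ.C_conv hΔ he β γ]
    have rhs : ∑ α ∈ Finset.Iic K, φ.C α e • psi hΔ hD α (a • KaehlerDifferential.D k A b)
        = ∑ β ∈ Finset.Iic K, ∑ γ ∈ Finset.Iic K,
            (φ.C (β + γ) e * D β a) • KaehlerDifferential.D k A (D γ b) := by
      have step : ∀ α ∈ Finset.Iic K,
          φ.C α e • psi hΔ hD α (a • KaehlerDifferential.D k A b)
            = ∑ β ∈ Finset.Iic α,
                (φ.C (β + (α - β)) e * D β a)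
                  • KaehlerDifferential.D k A (D (α - β) b) := by
        intro α _
        by_cases hα : α ∈ Δ
        · rw [psi_apply_smul hα, Finset.smul_sum]
          refine Finset.sum_congr rfl fun β hβ => ?_
          rw [add_tsub_cancel_of_le (Finset.mem_Iic.1 hβ), smul_smul]
        · rw [psi_not_mem hα, LinearMap.zero_apply, smul_zero]
          exact (Finset.sum_eq_zero fun β hβ => by
            rw [add_tsub_cancel_of_le (Finset.mem_Iic.1 hβ), φ.c_suppL α hα e,
              zero_mul, zero_smul]).symm
      rw [Finset.sum_congr rfl step,
        sum_Iic_pairs K (fun β γ =>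
          (φ.C (β + γ) e * D β a) • KaehlerDifferential.D k A (D γ b))
          (fun β γ h => by
            show (φ.C (β + γ) e * D β a) • KaehlerDifferential.D k A (D γ b) = 0
            rw [φ.C_zero_of_not_le he h, zero_mul, zero_smul])]
    rw [lhs, rhs]

end Subst

section Assembly

variable {p : ℕ}

/-- the `δ`-series concentrated in degree `0` -/
def dser {M : Type*} [Zero M] (x : M) : MIdx p → M := fun γ => if γ = 0 then x else 0

lemma fapply_dser {k M N : Type*} [Semiring k] [AddCommMonoid M] [AddCommMonoid N]
    [Module k M] [Module k N] (f : MIdx p → (M →ₗ[k] N)) (x : M) (α : MIdx p) :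
    fapply f (dser x) α = f α x := by
  rw [fapply, Finset.sum_eq_single_of_mem α (Finset.mem_Iic.2 le_rfl)]
  · rw [show (dser x (α - α) : M) = x by rw [dser]; simp]
  · intro β hβ hne
    have hz : α - β ≠ 0 := fun hz =>
      hne (le_antisymm (Finset.mem_Iic.1 hβ) (tsub_eq_zero_iff_le.1 hz))
    rw [show (dser x (α - β) : M) = 0 by rw [dser]; simp [hz], map_zero]

lemma smul'_dser {A M : Type*} [Semiring A] [AddCommMonoid M] [Module A M]
    (a : A) (m : M) : smul' (dser a) (dser m) = (dser (a • m) : MIdx p → M) := by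
  funext γ
  rw [smul', Finset.sum_eq_single_of_mem 0 (Finset.mem_Iic.2 zero_le)]
  · rw [show (dser a (0:MIdx p) : A) = a by rw [dser]; simp, tsub_zero, dser, dser]
    split <;> simp
  · intro β _ hβ0
    rw [show (dser a β : A) = 0 by rw [dser]; simp [hβ0], zero_smul]

variable {k A : Type*} [CommRing k] [CommRing A] [Algebra k A]
variable {Δ : Set (MIdx p)} {D : MIdx p → Module.End k A}
variable {hΔ : IsCoideal Δ} {hD : IsHS k A Δ D}

lemma psi_leibniz (a : MIdx p → A) (m : MIdx p → KaehlerDifferential k A)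
    {α : MIdx p} (h : α ∈ Δ) :
    fapply (psi hΔ hD) (smul' a m) α
      = smul' (fapply D a) (fapply (psi hΔ hD) m) α := by
  have lhs : fapply (psi hΔ hD) (smul' a m) α
      = ∑ u ∈ Finset.Iic α, ∑ c ∈ Finset.Iic (α - u), ∑ i ∈ Finset.Iic u,
          D i (a c) • psi hΔ hD (u - i) (m (α - u - c)) := by
    rw [fapply]
    refine Finset.sum_congr rfl fun u hu => ?_
    have hu' : u ∈ Δ := hΔ.mem_of_le h (Finset.mem_Iic.1 hu)
    rw [smul', map_sum]
    refine Finset.sum_congr rfl fun c _ => ?_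
    rw [psi_smul hu']
  have rhs : smul' (fapply D a) (fapply (psi hΔ hD) m) α
      = ∑ u ∈ Finset.Iic α, ∑ i ∈ Finset.Iic u, ∑ j ∈ Finset.Iic (α - u),
          D i (a (u - i)) • psi hΔ hD j (m (α - u - j)) := by
    rw [smul']
    refine Finset.sum_congr rfl fun u _ => ?_
    rw [fapply, fapply, Finset.sum_smul]
    refine Finset.sum_congr rfl fun i _ => ?_
    rw [Finset.smul_sum]
  rw [lhs, rhs, sum_P2 α (fun i c j z => D i (a c) • psi hΔ hD j (m z))]
  rw [show (∑ u ∈ Finset.Iic α, ∑ i ∈ Finset.Iic u, ∑ j ∈ Finset.Iic (α - u),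
      D i (a (u - i)) • psi hΔ hD j (m (α - u - j)))
    = cform α (fun i c j z => D i (a c) • psi hΔ hD j (m z)) from
      sum_P1 α (fun i c j z => D i (a c) • psi hΔ hD j (m z))]

end Assembly

/-- the pre-HS-module structure on the module of Kähler differentials -/
noncomputable def Psi (k A : Type*) [CommRing k] [CommRing A] [Algebra k A] :
    HSSystem k A (KaehlerDifferential k A) := fun _ Δ D =>
  if h : IsCoideal Δ ∧ IsHS _ _ Δ D then psi h.1 h.2 else one'

lemma Psi_pos {k A : Type*} [CommRing k] [CommRing A] [Algebra k A] {p : ℕ}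
    {Δ : Set (MIdx p)} {D : MIdx p → Module.End k A}
    (hΔ : IsCoideal Δ) (hD : IsHS k A Δ D) :
    Psi k A p Δ D = psi hΔ hD := by
  have h : IsCoideal Δ ∧ IsHS k A Δ D := ⟨hΔ, hD⟩
  show (if h : IsCoideal Δ ∧ IsHS k A Δ D then psi h.1 h.2 else one') = psi hΔ hD
  rw [dif_pos h]


/-- The `A`-module `Ω_{A/k}` of Kähler differentials carries a
unique left pre-HS-module structure over `A/k` such that the universal derivation
`d : A → Ω_{A/k}` is a HS-map, i.e. `Ψ^p_Δ(D) ∘ d̄ = d̄ ∘ D̃` for every `p`, every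
non-empty co-ideal `Δ ⊆ ℕ^p` and every `D ∈ HS^p_k(A;Δ)`.  In particular
`Ψ^p_Δ(D)_α ∘ d = d ∘ D_α` for all `α ∈ Δ`. -/
theorem stmt12 (k A : Type*) [CommRing k] [CommRing A] [Algebra k A] :
    ∃ Ψ : HSSystem k A (KaehlerDifferential k A),
      (IsPreHSMod k A (KaehlerDifferential k A) Ψ
        ∧ (∀ (p : ℕ) (Δ : Set (MIdx p)), IsCoideal Δ →
            ∀ D : MIdx p → Module.End k A, IsHS k A Δ D →
              (∀ aS : MIdx p → A, ∀ α ∈ Δ,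
                fapply (Ψ p Δ D) (fun β => KaehlerDifferential.D k A (aS β)) α
                  = KaehlerDifferential.D k A (fapply D aS α))
              ∧ (∀ α ∈ Δ, ∀ a : A,
                  Ψ p Δ D α (KaehlerDifferential.D k A a)
                    = KaehlerDifferential.D k A (D α a))))
      ∧ (∀ Ψ' : HSSystem k A (KaehlerDifferential k A),
          IsPreHSMod k A (KaehlerDifferential k A) Ψ' →
          (∀ (p : ℕ) (Δ : Set (MIdx p)), IsCoideal Δ →
            ∀ D : MIdx p → Module.End k A, IsHS k A Δ D →
              ∀ aS : MIdx p → A, ∀ α ∈ Δ,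
                fapply (Ψ' p Δ D) (fun β => KaehlerDifferential.D k A (aS β)) α
                  = KaehlerDifferential.D k A (fapply D aS α)) →
          ∀ (p : ℕ) (Δ : Set (MIdx p)), IsCoideal Δ →
            ∀ D : MIdx p → Module.End k A, IsHS k A Δ D →
              ∀ α ∈ Δ, Ψ' p Δ D α = Ψ p Δ D α) := by
  classical
  refine ⟨Psi k A, ⟨?_, ?_⟩, ?_⟩
  · -- IsPreHSMod
    intro p Δ hΔ D hD
    rw [Psi_pos hΔ hD]
    have hone : psi hΔ hD 0 = 1 := psi_zero hΔ.zero_mem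
    refine ⟨hone, ?_, ?_, ?_, ?_, ?_⟩
    · intro D' hD' hagree α hα
      rw [Psi_pos hΔ hD']
      exact psi_congr hagree hα
    · intro E hE α hα
      rw [Psi_pos hΔ hE, Psi_pos hΔ (IsHS.sconv_isHS hΔ hD hE)]
      exact psi_mul hα
    · exact ⟨linv (psi hΔ hD),
        fun α _ => congrFun (sconv_linv hone) α,
        fun α _ => congrFun (linv_sconv hone) α⟩
    · intro a m α hα
      exact psi_leibniz a m hα
    · intro q nab hq φ hconst e he x
      rw [Psi_pos hq (φ.bullet_isHS hΔ hq hD)]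
      exact psi_bullet φ hΔ hq hD hconst he x
  · -- d is an HS-map
    intro p Δ hΔ D hD
    rw [Psi_pos hΔ hD]
    constructor
    · intro aS α hα
      rw [fapply, fapply, map_sum]
      refine Finset.sum_congr rfl fun β hβ => ?_
      exact psi_d (hΔ.mem_of_le hα (Finset.mem_Iic.1 hβ)) _
    · intro α hα a
      exact psi_d hα a
  · -- uniqueness
    intro Ψ' hΨ' hd' p Δ hΔ D hD α hα
    have lei := (hΨ' p Δ hΔ D hD).2.2.2.2.1
    have hsemi : ∀ γ ∈ Δ, ∀ (a : A) (ω : KaehlerDifferential k A),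
        Ψ' p Δ D γ (a • ω) = ∑ β ∈ Finset.Iic γ, D β a • Ψ' p Δ D (γ - β) ω := by
      intro γ hγ a ω
      have h1 := lei (dser a) (dser ω) γ hγ
      rw [smul'_dser, fapply_dser] at h1
      rw [h1, smul']
      exact Finset.sum_congr rfl fun β _ => by rw [fapply_dser, fapply_dser]
    have hdc : ∀ γ ∈ Δ, ∀ b : A,
        Ψ' p Δ D γ (KaehlerDifferential.D k A b)
          = KaehlerDifferential.D k A (D γ b) := by
      intro γ hγ b
      have h1 := hd' p Δ hΔ D hD (dser b) γ hγ
      have hfun : (fun β => KaehlerDifferential.D k A (dser b β))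
          = (dser (KaehlerDifferential.D k A b) : MIdx p → KaehlerDifferential k A) := by
        funext β
        rw [dser, dser]
        split <;> simp
      rw [hfun, fapply_dser, fapply_dser] at h1
      exact h1
    rw [Psi_pos hΔ hD]
    refine LinearMap.ext (omega_ind ?_ ?_ ?_)
    · rw [map_zero, map_zero]
    · intro x y hx hy
      rw [map_add, map_add, hx, hy]
    · intro a b
      rw [psi_apply_smul hα, hsemi α hα]
      refine Finset.sum_congr rfl fun β _ => ?_
      rw [hdc (α - β) (hΔ.sub_mem hα β)]


end HS
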